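/- For every integer n ≥ 1, Y(n) = a(n) + n, where a(n) is one more than the position (indexed from 0) of the n-th occurrence of the symbol 0 in the infinite Tribonacci word TR (so the first occurrence corresponds to n = 1). -/

import Mathlib

open Classical

/-- The pair of sequences OEIS A140100 / A140101, defined greedily:
`XY 0 = (0,0)`, `XY 1 = (1,2)`, and for `n > 1`, `XY n = (x, y)` where `x` is least
(and then `y` least) such that `0 < x < y`, neither `x` nor `y` occurs among the earlier
`X`- or `Y`-values with index `1 ≤ k < n`, and `y - x` occurs among neither the earlier
differences `Y k - X k` nor the earlier sums `Y k + X k`. -/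
noncomputable def XY : ℕ → ℕ × ℕ
  | 0 => (0, 0)
  | 1 => (1, 2)
  | n + 2 =>
      let P : ℕ → ℕ → Prop := fun x y =>
        0 < x ∧ x < y ∧
        ∀ k, 1 ≤ k → k < n + 2 →
          (XY k).1 ≠ x ∧ (XY k).1 ≠ y ∧ (XY k).2 ≠ x ∧ (XY k).2 ≠ y ∧
          (XY k).2 - (XY k).1 ≠ y - x ∧ (XY k).2 + (XY k).1 ≠ y - x
      let x := sInf {x | ∃ y, P x y}
      (x, sInf {y | P x y})
  termination_by n => n
  decreasing_by all_goals omega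

/-- Sequence OEIS A140100. -/
noncomputable def X (n : ℕ) : ℕ := (XY n).1

/-- Sequence OEIS A140101. -/
noncomputable def Y (n : ℕ) : ℕ := (XY n).2

/-- The morphism 0 ↦ 01, 1 ↦ 02, 2 ↦ 0. -/
def tribMorph : ℕ → List ℕ
  | 0 => [0, 1]
  | 1 => [0, 2]
  | _ => [0]

/-- The infinite Tribonacci word TR = 0102010010201⋯, the fixed point of the
morphism 0 ↦ 01, 1 ↦ 02, 2 ↦ 0 starting with 0. -/
def TR (n : ℕ) : ℕ := ((fun l : List ℕ => (l.map tribMorph).flatten)^[n + 1] [0]).getD n 0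

/-- For `n ≥ 1`, one more than the position (indexed from 0) of the `n`-th occurrence
of the symbol `s` in TR; and `0` at `n = 0`. -/
noncomputable def posSeq (s : ℕ) (n : ℕ) : ℕ :=
  if n = 0 then 0 else Nat.nth (fun m => TR m = s) (n - 1) + 1

namespace Trib

def step (l : List ℕ) : List ℕ := (l.map tribMorph).flatten

def W (k : ℕ) : List ℕ := step^[k] [0]

lemma W_succ (k : ℕ) : W (k+1) = step (W k) := Function.iterate_succ_apply' step k [0]

lemma TR_def (n : ℕ) : TR n = (W (n+1)).getD n 0 := rfl

lemma step_append (l l' : List ℕ) : step (l ++ l') = step l ++ step l' := by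
  simp [step]

lemma step_prefix {l l' : List ℕ} (h : l <+: l') : step l <+: step l' := by
  rcases h with ⟨t, rfl⟩
  exact ⟨step t, (step_append l t).symm⟩

lemma W_prefix_succ (k : ℕ) : W k <+: W (k+1) := by
  induction k with
  | zero => exact ⟨[1], rfl⟩
  | succ k ih => rw [W_succ, W_succ]; exact step_prefix ih

lemma W_prefix {k j : ℕ} (h : k ≤ j) : W k <+: W j := by
  induction j with
  | zero => simp_all
  | succ j ih =>
    rcases Nat.lt_or_ge k (j+1) with h' | h'
    · exact (ih (by omega)).trans (W_prefix_succ j)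
    · have : k = j + 1 := by omega
      subst this; exact List.prefix_rfl

lemma length_tribMorph_pos (c : ℕ) : 0 < (tribMorph c).length := by
  match c with
  | 0 => simp [tribMorph]
  | 1 => simp [tribMorph]
  | (n+2) => simp [tribMorph]

lemma length_step_ge (l : List ℕ) : l.length ≤ (step l).length := by
  induction l with
  | nil => simp [step]
  | cons a t ih =>
    have : step (a :: t) = tribMorph a ++ step t := rfl
    rw [this]
    simp only [List.length_append, List.length_cons]
    have := length_tribMorph_pos a
    omega

lemma length_W (k : ℕ) : k + 1 ≤ (W k).length := by
  induction k with
  | zero => simp [W]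
  | succ k ih =>
    rw [W_succ]
    -- head of W k is 0
    have hpre : [0] <+: W k := W_prefix (Nat.zero_le k)
    rcases hpre with ⟨t, ht⟩
    have : step (W k) = [0,1] ++ step t := by rw [← ht]; rfl
    rw [this]
    have h2 := length_step_ge t
    have h3 : (W k).length = t.length + 1 := by rw [← ht]; simp
    simp only [List.length_append, List.length_cons, List.length_nil]
    omega

lemma getD_prefix {l l' : List ℕ} (h : l <+: l') {i : ℕ} (hi : i < l.length) :
    l'.getD i 0 = l.getD i 0 := by
  rcases h with ⟨t, rfl⟩
  exact List.getD_append l t 0 i hi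

lemma TR_eq_W {k n : ℕ} (h : n < (W k).length) : TR n = (W k).getD n 0 := by
  rw [TR_def]
  rcases Nat.le_total k (n+1) with hk | hk
  · exact getD_prefix (W_prefix hk) h
  · exact (getD_prefix (W_prefix hk) (show n < (W (n+1)).length by have := length_W (n+1); omega)).symm


def msum (l : List ℕ) : ℕ := (l.map (fun c => (tribMorph c).length)).sum

lemma step_cons (a : ℕ) (t : List ℕ) : step (a :: t) = tribMorph a ++ step t := rfl

lemma step_getD : ∀ (l : List ℕ) (m p : ℕ), m < l.length → p < (tribMorph (l.getD m 0)).length →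
    (step l).getD (msum (l.take m) + p) 0 = (tribMorph (l.getD m 0)).getD p 0 := by
  intro l
  induction l with
  | nil => intro m p h; simp at h
  | cons a t ih =>
    intro m p hm hp
    match m with
    | 0 =>
      simp only [List.take_zero, msum, List.map_nil, List.sum_nil, Nat.zero_add]
      rw [step_cons]
      exact List.getD_append _ _ _ _ (by simpa using hp)
    | m+1 =>
      have htake : (a :: t).take (m+1) = a :: t.take m := rfl
      have hg : (a :: t).getD (m+1) 0 = t.getD m 0 := rfl
      rw [htake, hg] at *
      have hmsum : msum (a :: t.take m) = (tribMorph a).length + msum (t.take m) := by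
        simp [msum]
      rw [hmsum, step_cons]
      rw [Nat.add_assoc, List.getD_append_right _ _ _ _ (by omega)]
      have : (tribMorph a).length + (msum (t.take m) + p) - (tribMorph a).length
          = msum (t.take m) + p := by omega
      rw [this]
      exact ih m p (by simpa using hm) hp

lemma step_getD_length : ∀ (l : List ℕ) (m : ℕ), m < l.length →
    msum (l.take m) + (tribMorph (l.getD m 0)).length ≤ (step l).length := by
  intro l
  induction l with
  | nil => intro m h; simp at h
  | cons a t ih =>
    intro m hm
    match m with
    | 0 =>
      simp only [List.take_zero, msum, List.map_nil, List.sum_nil, Nat.zero_add]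
      rw [step_cons]
      simp
    | m+1 =>
      have htake : (a :: t).take (m+1) = a :: t.take m := rfl
      have hg : (a :: t).getD (m+1) 0 = t.getD m 0 := rfl
      rw [htake, hg]
      have hmsum : msum (a :: t.take m) = (tribMorph a).length + msum (t.take m) := by
        simp [msum]
      rw [hmsum, step_cons]
      simp only [List.length_append]
      have := ih m (by simpa using hm)
      omega

def Lf : ℕ → ℕ
  | 0 => 0
  | m+1 => Lf m + (tribMorph (TR m)).length

lemma msum_take (k m : ℕ) (h : m ≤ (W k).length) : msum ((W k).take m) = Lf m := by
  induction m with
  | zero => simp [msum, Lf]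
  | succ m ih =>
    rw [List.take_succ]
    have hm : m < (W k).length := by omega
    have : (W k)[m]? = some ((W k).getD m 0) := by
      rw [List.getElem?_eq_getElem hm]
      simp [List.getD, List.getElem?_eq_getElem hm]
    rw [this, Option.toList_some]
    have : msum ((W k).take m ++ [(W k).getD m 0])
        = msum ((W k).take m) + (tribMorph ((W k).getD m 0)).length := by simp [msum]
    rw [this, ih (by omega), ← TR_eq_W hm]
    rfl

lemma TR_block {m p : ℕ} (hp : p < (tribMorph (TR m)).length) :
    TR (Lf m + p) = (tribMorph (TR m)).getD p 0 := by
  have hm : m < (W m).length := by have := length_W m; omega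
  have hTR : (W m).getD m 0 = TR m := (TR_eq_W hm).symm
  have h1 := step_getD (W m) m p hm (by rwa [hTR])
  have h2 := step_getD_length (W m) m hm
  rw [msum_take m m (by omega), hTR] at h1 h2
  have hlen : Lf m + p < (W (m+1)).length := by
    rw [W_succ]; omega
  rw [TR_eq_W (k := m+1) hlen, W_succ]
  exact h1

lemma tribMorph_len (c : ℕ) :
    (tribMorph c).length = 1 + (if c = 0 then 1 else 0) + (if c = 1 then 1 else 0) := by
  match c with
  | 0 => rfl
  | 1 => rfl
  | (n+2) => simp [tribMorph]

def Zc (m : ℕ) : ℕ := Nat.count (fun k => TR k = 0) m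
def Oc (m : ℕ) : ℕ := Nat.count (fun k => TR k = 1) m

lemma Zc_succ (m : ℕ) : Zc (m+1) = Zc m + if TR m = 0 then 1 else 0 := by
  simpa [Zc] using Nat.count_succ (fun k => TR k = 0) m
lemma Oc_succ (m : ℕ) : Oc (m+1) = Oc m + if TR m = 1 then 1 else 0 := by
  simpa [Oc] using Nat.count_succ (fun k => TR k = 1) m
lemma Zc_le (m : ℕ) : Zc m ≤ m := Nat.count_le _
lemma Oc_le (m : ℕ) : Oc m ≤ m := Nat.count_le _

lemma tri (c : ℕ) : c = 0 ∨ c = 1 ∨ 2 ≤ c := by omega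
lemma tribMorph_ge {c : ℕ} (h : 2 ≤ c) : tribMorph c = [0] := by
  match c, h with
  | (n+2), _ => rfl
lemma tribMorph_head (c : ℕ) : (tribMorph c).getD 0 0 = 0 := by
  rcases tri c with h|h|h
  · subst h; rfl
  · subst h; rfl
  · rw [tribMorph_ge h]; rfl

lemma Lf_succ (m : ℕ) : Lf (m+1) = Lf m + (tribMorph (TR m)).length := rfl

lemma Lf_count (m : ℕ) : Lf m = m + Zc m + Oc m := by
  induction m with
  | zero => rfl
  | succ m ih =>
    rw [Lf_succ, ih, tribMorph_len, Zc_succ, Oc_succ]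
    by_cases h0 : TR m = 0 <;> by_cases h1 : TR m = 1 <;> simp [h0, h1] <;> omega

lemma Lf_lt_succ (m : ℕ) : Lf m < Lf (m+1) := by
  rw [Lf_succ, tribMorph_len]; omega
lemma Lf_succ_le (m : ℕ) : Lf (m+1) ≤ Lf m + 2 := by
  rw [Lf_succ, tribMorph_len]
  by_cases h0 : TR m = 0 <;> by_cases h1 : TR m = 1 <;> simp [h0, h1]
lemma Lf_strictMono : StrictMono Lf := strictMono_nat_of_lt_succ Lf_lt_succ
lemma le_Lf (m : ℕ) : m ≤ Lf m := by rw [Lf_count]; omega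

lemma TR_Lf (m : ℕ) : TR (Lf m) = 0 := by
  have h := TR_block (m := m) (p := 0) (by rw [tribMorph_len]; omega)
  rw [Nat.add_zero] at h
  rw [h, tribMorph_head]

lemma TR_Lf_one {m : ℕ} (h : TR m = 0) : TR (Lf m + 1) = 1 := by
  have hp : (1:ℕ) < (tribMorph (TR m)).length := by rw [tribMorph_len, h]; simp
  rw [TR_block hp, h]; rfl

lemma TR_Lf_two {m : ℕ} (h : TR m = 1) : TR (Lf m + 1) = 2 := by
  have hp : (1:ℕ) < (tribMorph (TR m)).length := by rw [tribMorph_len, h]; simp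
  rw [TR_block hp, h]; rfl

lemma exists_block (p : ℕ) : ∃ m, Lf m ≤ p ∧ p < Lf (m+1) := by
  induction p with
  | zero => exact ⟨0, Nat.le_refl 0, Lf_lt_succ 0⟩
  | succ p ih =>
    obtain ⟨m, h1, h2⟩ := ih
    by_cases h : p + 1 < Lf (m+1)
    · exact ⟨m, by omega, h⟩
    · exact ⟨m+1, by omega, by have := Lf_lt_succ (m+1); omega⟩

lemma TR_zero_iff {p : ℕ} : TR p = 0 ↔ ∃ m, p = Lf m := by
  constructor
  · intro h
    obtain ⟨m, h1, h2⟩ := exists_block p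
    rcases Nat.eq_or_lt_of_le h1 with heq | hlt
    · exact ⟨m, heq.symm⟩
    · exfalso
      have hq : p = Lf m + 1 := by have := Lf_succ_le m; omega
      have hlen : 1 < (tribMorph (TR m)).length := by
        rw [Lf_succ] at h2; omega
      rcases tri (TR m) with h' | h' | h'
      · rw [hq, TR_Lf_one h'] at h; omega
      · rw [hq, TR_Lf_two h'] at h; omega
      · rw [tribMorph_ge h'] at hlen; simp at hlen
  · rintro ⟨m, rfl⟩; exact TR_Lf m

lemma TR_one_iff {p : ℕ} : TR p = 1 ↔ ∃ m, TR m = 0 ∧ p = Lf m + 1 := by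
  constructor
  · intro h
    obtain ⟨m, h1, h2⟩ := exists_block p
    rcases Nat.eq_or_lt_of_le h1 with heq | hlt
    · rw [← heq, TR_Lf m] at h; omega
    · have hq : p = Lf m + 1 := by have := Lf_succ_le m; omega
      have hlen : 1 < (tribMorph (TR m)).length := by
        rw [Lf_succ] at h2; omega
      rcases tri (TR m) with h' | h' | h'
      · exact ⟨m, h', hq⟩
      · rw [hq, TR_Lf_two h'] at h; omega
      · rw [tribMorph_ge h'] at hlen; simp at hlen
  · rintro ⟨m, hm, rfl⟩; exact TR_Lf_one hm

lemma Zc_Oc_Lf (m : ℕ) : Zc (Lf m) = m ∧ Oc (Lf m) = Zc m := by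
  induction m with
  | zero => exact ⟨rfl, rfl⟩
  | succ m ih =>
    obtain ⟨ihz, iho⟩ := ih
    rcases tri (TR m) with h' | h' | h'
    · have hL : Lf (m+1) = Lf m + 1 + 1 := by rw [Lf_succ, h']; rfl
      rw [hL, Zc_succ, Zc_succ, Oc_succ, Oc_succ, TR_Lf m, TR_Lf_one h', Zc_succ]
      simp [ihz, iho, h']
    · have hL : Lf (m+1) = Lf m + 1 + 1 := by rw [Lf_succ, h']; rfl
      rw [hL, Zc_succ, Zc_succ, Oc_succ, Oc_succ, TR_Lf m, TR_Lf_two h', Zc_succ]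
      simp [ihz, iho, h']
    · have hne0 : TR m ≠ 0 := by omega
      have hne1 : TR m ≠ 1 := by omega
      have hL : Lf (m+1) = Lf m + 1 := by rw [Lf_succ, tribMorph_ge h']; rfl
      rw [hL, Zc_succ, Oc_succ, TR_Lf m, Zc_succ]
      simp [ihz, iho, hne0, hne1]

lemma Zc_Lf (m : ℕ) : Zc (Lf m) = m := (Zc_Oc_Lf m).1
lemma Oc_Lf (m : ℕ) : Oc (Lf m) = Zc m := (Zc_Oc_Lf m).2

lemma Oc_LfLf_one (j : ℕ) : Oc (Lf (Lf j) + 1) = j := by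
  rw [Oc_succ, TR_Lf (Lf j)]
  simp [Oc_Lf, Zc_Lf]


lemma Zc_zero : Zc 0 = 0 := rfl
lemma Oc_zero : Oc 0 = 0 := rfl
lemma Lf_zero : Lf 0 = 0 := rfl

/-! ### The candidate sequences -/

noncomputable def xs : ℕ → ℕ
  | 0 => 0
  | m+1 => m + Zc m + 1

noncomputable def ys : ℕ → ℕ
  | 0 => 0
  | m+1 => Lf m + m + 2

noncomputable def ds : ℕ → ℕ
  | 0 => 0
  | m+1 => m + Oc m + 1

noncomputable def ss (n : ℕ) : ℕ := ys n + xs n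

lemma ys_eq_add (n : ℕ) : ys n = xs n + ds n := by
  match n with
  | 0 => rfl
  | m+1 =>
    show Lf m + m + 2 = (m + Zc m + 1) + (m + Oc m + 1)
    rw [Lf_count]; ring

lemma xs_succ_succ (m : ℕ) : xs (m+2) = xs (m+1) + 1 + if TR m = 0 then 1 else 0 := by
  show (m+1) + Zc (m+1) + 1 = _
  rw [Zc_succ]
  show m + 1 + (Zc m + _) + 1 = m + Zc m + 1 + 1 + _
  ring

lemma ds_succ_succ (m : ℕ) : ds (m+2) = ds (m+1) + 1 + if TR m = 1 then 1 else 0 := by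
  show (m+1) + Oc (m+1) + 1 = _
  rw [Oc_succ]
  show m + 1 + (Oc m + _) + 1 = m + Oc m + 1 + 1 + _
  ring

lemma xs_lt_succ (n : ℕ) : xs n < xs (n+1) := by
  match n with
  | 0 => show 0 < 0 + Zc 0 + 1; omega
  | m+1 => rw [xs_succ_succ]; omega

lemma ds_lt_succ (n : ℕ) : ds n < ds (n+1) := by
  match n with
  | 0 => show 0 < 0 + Oc 0 + 1; omega
  | m+1 => rw [ds_succ_succ]; omega

lemma xs_succ_le (n : ℕ) : xs (n+1) ≤ xs n + 2 := by
  match n with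
  | 0 => show 0 + Zc 0 + 1 ≤ 0 + 2; rw [Zc_zero]; omega
  | m+1 => rw [xs_succ_succ]; split <;> omega

lemma ds_succ_le (n : ℕ) : ds (n+1) ≤ ds n + 2 := by
  match n with
  | 0 => show 0 + Oc 0 + 1 ≤ 0 + 2; rw [Oc_zero]; omega
  | m+1 => rw [ds_succ_succ]; split <;> omega

lemma xs_mono : StrictMono xs := strictMono_nat_of_lt_succ xs_lt_succ
lemma ds_mono : StrictMono ds := strictMono_nat_of_lt_succ ds_lt_succ
lemma ys_mono : StrictMono ys := by
  have h : ∀ n, ys n < ys (n+1) := by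
    intro n
    rw [ys_eq_add, ys_eq_add]
    have := xs_lt_succ n
    have := ds_lt_succ n
    omega
  exact strictMono_nat_of_lt_succ h

lemma xs_pos {n : ℕ} (h : 1 ≤ n) : 1 ≤ xs n := by
  have := xs_mono (show 0 < n from h); have h0 : xs 0 = 0 := rfl; omega

lemma xs_lt_ys {n : ℕ} (h : 1 ≤ n) : xs n < ys n := by
  rw [ys_eq_add]
  have : 1 ≤ ds n := by have := ds_mono (show 0 < n from h); have h0 : ds 0 = 0 := rfl; omega
  omega

lemma ds_lt_ss {n : ℕ} (h : 1 ≤ n) : ds n < ys n + xs n := by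
  have h1 := xs_pos h
  have h2 := ys_eq_add n
  omega

/-! ### Gap lemmas -/

lemma exists_between {u : ℕ → ℕ} (h0 : u 0 = 0) (hmono : ∀ n, u n < u (n+1)) (p : ℕ) :
    ∃ m, u m ≤ p ∧ p < u (m+1) := by
  induction p with
  | zero => exact ⟨0, by omega, by have := hmono 0; omega⟩
  | succ p ih =>
    obtain ⟨m, h1, h2⟩ := ih
    by_cases h : p + 1 < u (m+1)
    · exact ⟨m, by omega, h⟩
    · exact ⟨m+1, by omega, by have := hmono (m+1); omega⟩

lemma gap_union {u v : ℕ → ℕ} (h0 : u 0 = 0) (hmono : ∀ n, u n < u (n+1))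
    (hle : ∀ n, u (n+1) ≤ u n + 2)
    (hgap : ∀ n, u (n+1) = u n + 2 → ∃ k, 1 ≤ k ∧ v k = u n + 1)
    {m : ℕ} (hm : 1 ≤ m) :
    (∃ n, 1 ≤ n ∧ u n = m) ∨ (∃ k, 1 ≤ k ∧ v k = m) := by
  obtain ⟨n, h1, h2⟩ := exists_between h0 hmono m
  rcases Nat.eq_or_lt_of_le h1 with heq | hlt
  · left
    refine ⟨n, ?_, heq⟩
    rcases Nat.eq_zero_or_pos n with rfl | h
    · omega
    · exact h
  · right
    have hgap2 : u (n+1) = u n + 2 := by have := hle n; omega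
    obtain ⟨k, hk1, hk2⟩ := hgap n hgap2
    exact ⟨k, hk1, by omega⟩

lemma gap_disj {u v : ℕ → ℕ} (humono : StrictMono u)
    (hgap' : ∀ k, 1 ≤ k → ∃ n, u (n+1) = u n + 2 ∧ v k = u n + 1)
    {n k : ℕ} (hk : 1 ≤ k) : u n ≠ v k := by
  obtain ⟨n₀, h1, h2⟩ := hgap' k hk
  intro heq
  rcases Nat.lt_trichotomy n n₀ with h | h | h
  · have := humono h; omega
  · subst h; omega
  · have : n₀ + 1 ≤ n := h
    have := humono.le_iff_le.2 this
    omega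

/-! ### Instantiations -/

lemma xs_gap {n : ℕ} (h : xs (n+1) = xs n + 2) : ∃ k, 1 ≤ k ∧ ys k = xs n + 1 := by
  match n, h with
  | 0, h => simp [xs, Zc_zero] at h
  | m+1, h =>
    rw [xs_succ_succ] at h
    have h0 : TR m = 0 := by by_contra hne; rw [if_neg hne] at h; omega
    obtain ⟨j, rfl⟩ := TR_zero_iff.1 h0
    refine ⟨j+1, by omega, ?_⟩
    show Lf j + j + 2 = ((Lf j) + Zc (Lf j) + 1) + 1
    rw [Zc_Lf]

lemma xs_gap' {k : ℕ} (hk : 1 ≤ k) : ∃ n, xs (n+1) = xs n + 2 ∧ ys k = xs n + 1 := by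
  obtain ⟨j, rfl⟩ : ∃ j, k = j + 1 := ⟨k - 1, by omega⟩
  refine ⟨Lf j + 1, ?_, ?_⟩
  · rw [xs_succ_succ, TR_Lf j]; simp
  · show Lf j + j + 2 = ((Lf j) + Zc (Lf j) + 1) + 1
    rw [Zc_Lf]

lemma LfLf (j : ℕ) : Lf (Lf j) = Lf j + j + Zc j := by
  rw [Lf_count (Lf j), Zc_Lf, Oc_Lf]

lemma ss_succ (j : ℕ) : ss (j+1) = Lf j + 2*j + Zc j + 3 := by
  show (Lf j + j + 2) + (j + Zc j + 1) = _
  ring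

lemma ds_gap {n : ℕ} (h : ds (n+1) = ds n + 2) : ∃ k, 1 ≤ k ∧ ss k = ds n + 1 := by
  match n, h with
  | 0, h => simp [ds, Oc_zero] at h
  | m+1, h =>
    rw [ds_succ_succ] at h
    have h1 : TR m = 1 := by by_contra hne; rw [if_neg hne] at h; omega
    obtain ⟨m', hm'0, hm'⟩ := TR_one_iff.1 h1
    obtain ⟨j, rfl⟩ := TR_zero_iff.1 hm'0
    subst hm'
    refine ⟨j+1, by omega, ?_⟩
    rw [ss_succ]
    show Lf j + 2*j + Zc j + 3 = (Lf (Lf j) + 1) + Oc (Lf (Lf j) + 1) + 1 + 1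
    rw [Oc_LfLf_one, LfLf]
    ring

lemma ds_gap' {k : ℕ} (hk : 1 ≤ k) : ∃ n, ds (n+1) = ds n + 2 ∧ ss k = ds n + 1 := by
  obtain ⟨j, rfl⟩ : ∃ j, k = j + 1 := ⟨k - 1, by omega⟩
  refine ⟨Lf (Lf j) + 1 + 1, ?_, ?_⟩
  · rw [ds_succ_succ, TR_one_iff.2 ⟨Lf j, TR_Lf j, rfl⟩]; simp
  · rw [ss_succ]
    show Lf j + 2*j + Zc j + 3 = (Lf (Lf j) + 1) + Oc (Lf (Lf j) + 1) + 1 + 1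
    rw [Oc_LfLf_one, LfLf]
    ring

lemma xy_union {m : ℕ} (hm : 1 ≤ m) :
    (∃ n, 1 ≤ n ∧ xs n = m) ∨ (∃ k, 1 ≤ k ∧ ys k = m) :=
  gap_union rfl xs_lt_succ xs_succ_le (fun _ => xs_gap) hm

lemma xy_disj {n k : ℕ} (hk : 1 ≤ k) : xs n ≠ ys k :=
  gap_disj xs_mono (fun _ => xs_gap') hk

lemma dssum_union {m : ℕ} (hm : 1 ≤ m) :
    (∃ n, 1 ≤ n ∧ ds n = m) ∨ (∃ k, 1 ≤ k ∧ ys k + xs k = m) := by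
  rcases gap_union rfl ds_lt_succ ds_succ_le (fun _ => ds_gap) hm with h | ⟨k, h1, h2⟩
  · exact Or.inl h
  · exact Or.inr ⟨k, h1, h2⟩

lemma dssum_disj {n k : ℕ} (hk : 1 ≤ k) : ds n ≠ ys k + xs k :=
  gap_disj ds_mono (fun _ => ds_gap') hk


lemma xs_one : xs 1 = 1 := by show 0 + Zc 0 + 1 = 1; rw [Zc_zero]
lemma ys_one : ys 1 = 2 := by show Lf 0 + 0 + 2 = 2; rw [Lf_zero]

def Pdef (n : ℕ) (x y : ℕ) : Prop :=
  0 < x ∧ x < y ∧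
  ∀ k, 1 ≤ k → k < n + 2 →
    (XY k).1 ≠ x ∧ (XY k).1 ≠ y ∧ (XY k).2 ≠ x ∧ (XY k).2 ≠ y ∧
    (XY k).2 - (XY k).1 ≠ y - x ∧ (XY k).2 + (XY k).1 ≠ y - x

lemma XY_unfold (n : ℕ) : XY (n+2) = (sInf {x | ∃ y, Pdef n x y},
    sInf {y | Pdef n (sInf {x | ∃ y, Pdef n x y}) y}) := by
  rw [XY]; rfl

theorem XY_eq : ∀ n, 1 ≤ n → XY n = (xs n, ys n) := by
  intro n
  induction n using Nat.strong_induction_on with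
  | _ n ih =>
    intro hn
    match n, hn with
    | 1, _ =>
      have h1 : XY 1 = (1, 2) := by rw [XY]
      rw [h1, xs_one, ys_one]
    | (m+2), _ =>
      set n := m + 2 with hn2
      have hn1 : 1 ≤ n := by omega
      -- the key membership fact
      have hPmem : Pdef m (xs n) (ys n) := by
        refine ⟨xs_pos hn1, xs_lt_ys hn1, ?_⟩
        intro k hk1 hk2
        rw [ih k hk2 hk1]
        have hkn : k < n := hk2
        have e1 : ys k = xs k + ds k := ys_eq_add k
        have e2 : ys n = xs n + ds n := ys_eq_add n
        have hd : ds k < ds n := ds_mono hkn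
        refine ⟨ne_of_lt (xs_mono hkn), xy_disj hn1, (xy_disj hk1).symm,
          ne_of_lt (ys_mono hkn), by omega, ?_⟩
        have := dssum_disj (n := n) (k := k) hk1
        omega
      -- blocking: any x < xs n admits no y
      have hxblock : ∀ x, x < xs n → ∀ y, ¬ Pdef m x y := by
        intro x hx y hP
        rcases Nat.eq_zero_or_pos x with rfl | hx1
        · exact absurd hP.1 (by omega)
        rcases xy_union hx1 with ⟨k, hk1, hke⟩ | ⟨k, hk1, hke⟩
        · have hkn : k < n := by
            have : xs k < xs n := by omega
            exact xs_mono.lt_iff_lt.1 this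
          have := (hP.2.2 k hk1 hkn).1
          rw [ih k hkn hk1] at this
          exact this hke
        · have hkn : k < n := by
            have : ys k < ys n := by have := xs_lt_ys hn1; omega
            exact ys_mono.lt_iff_lt.1 this
          have := (hP.2.2 k hk1 hkn).2.2.1
          rw [ih k hkn hk1] at this
          exact this hke
      -- blocking for y
      have hyblock : ∀ y, y < ys n → ¬ Pdef m (xs n) y := by
        intro y hy hP
        have hxy : xs n < y := hP.2.1
        have e2 : ys n = xs n + ds n := ys_eq_add n
        have he1 : 1 ≤ y - xs n := by omega
        rcases dssum_union he1 with ⟨k, hk1, hke⟩ | ⟨k, hk1, hke⟩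
        · have hkn : k < n := by
            have : ds k < ds n := by omega
            exact ds_mono.lt_iff_lt.1 this
          have := (hP.2.2 k hk1 hkn).2.2.2.2.1
          rw [ih k hkn hk1] at this
          have e1 : ys k = xs k + ds k := ys_eq_add k
          simp only at this
          omega
        · have hkn : k < n := by
            have h3 : ds k < ds n := by have := ds_lt_ss hk1; omega
            exact ds_mono.lt_iff_lt.1 h3
          have := (hP.2.2 k hk1 hkn).2.2.2.2.2
          rw [ih k hkn hk1] at this
          simp only at this
          omega
      -- conclude
      have hSne : xs n ∈ {x | ∃ y, Pdef m x y} := ⟨ys n, hPmem⟩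
      have hxinf : sInf {x | ∃ y, Pdef m x y} = xs n := by
        have h1 : sInf {x | ∃ y, Pdef m x y} ≤ xs n := Nat.sInf_le hSne
        have h2 : sInf {x | ∃ y, Pdef m x y} ∈ {x | ∃ y, Pdef m x y} :=
          Nat.sInf_mem ⟨_, hSne⟩
        rcases Nat.eq_or_lt_of_le h1 with heq | hlt
        · exact heq
        · obtain ⟨ycand, hyc⟩ := h2
          exact absurd hyc (hxblock _ hlt ycand)
      have hyinf : sInf {y | Pdef m (xs n) y} = ys n := by
        have hTne : ys n ∈ {y | Pdef m (xs n) y} := hPmem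
        have h1 : sInf {y | Pdef m (xs n) y} ≤ ys n := Nat.sInf_le hTne
        have h2 : sInf {y | Pdef m (xs n) y} ∈ {y | Pdef m (xs n) y} :=
          Nat.sInf_mem ⟨_, hTne⟩
        rcases Nat.eq_or_lt_of_le h1 with heq | hlt
        · exact heq
        · exact absurd h2 (hyblock _ hlt)
      rw [XY_unfold m, hxinf, hyinf]

lemma nth_zero (j : ℕ) : Nat.nth (fun m => TR m = 0) j = Lf j := by
  have h := Nat.nth_count (p := fun m => TR m = 0) (TR_Lf j)
  rwa [show Nat.count (fun m => TR m = 0) (Lf j) = j from Zc_Lf j] at h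

end Trib

theorem Y_eq_a_add_n (n : ℕ) (hn : 1 ≤ n) : Y n = posSeq 0 n + n := by
  obtain ⟨m, rfl⟩ : ∃ m, n = m + 1 := ⟨n - 1, by omega⟩
  have h1 : Y (m+1) = Trib.ys (m+1) := by rw [Y, Trib.XY_eq (m+1) (by omega)]
  rw [h1]
  show Trib.Lf m + m + 2 = posSeq 0 (m+1) + (m+1)
  rw [posSeq, if_neg (by omega : m + 1 ≠ 0)]
  simp only [Nat.add_sub_cancel]
  rw [Trib.nth_zero]
  ring
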